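/- arXiv:1408.1922 — 6 statements merged into one kernel-verified Lean document; each statement's English description precedes it below -/
import Mathlib

section
/- Let Q_i = diag(w) T_i with T_i = R C_i (C_i permutations on ℂ^{n²}, R restriction), and define 𝒬²_i = T_i (Σ_j Q_j* Q_j) T_i*. Then 𝒬²_i = diag(T_i T* S |w|²), where T* S |w|² := Σ_j T_j* |w|²; in particular each 𝒬²_i is a diagonal matrix with nonnegative entries. -/
open Matrix BigOperators
open scoped ComplexOrder

noncomputable section

/-- Restriction matrix extracting the first `m` coordinates of `ℂ^n`. -/
def restrictM (m n : ℕ) : Matrix (Fin m) (Fin n) ℂ :=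
  Matrix.of fun i j => if (i : ℕ) = (j : ℕ) then 1 else 0

/-- Permutation matrix of `σ` acting on `ℂ^n`. -/
def permM {n : ℕ} (σ : Equiv.Perm (Fin n)) : Matrix (Fin n) (Fin n) ℂ :=
  Matrix.of fun i j => if σ j = i then 1 else 0

/-- K-fold stacking matrix: K copies of the identity stacked vertically. -/
def stackM (K m : ℕ) : Matrix (Fin K × Fin m) (Fin m) ℂ :=
  Matrix.of fun p j => if p.2 = j then 1 else 0

/-- Stacked frame-extraction matrix with blocks `T_i = R C_i`. -/
def Tstack (K m n : ℕ) (σ : Fin K → Equiv.Perm (Fin n)) :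
    Matrix (Fin K × Fin m) (Fin n) ℂ :=
  Matrix.of fun p j => (restrictM m n * permM (σ p.1)) p.2 j

theorem stmt7 {K m n : ℕ} (hmn : m ≤ n) (σ : Fin K → Equiv.Perm (Fin n))
    (w : Fin m → ℂ)
    (T : Fin K → Matrix (Fin m) (Fin n) ℂ)
    (hT : ∀ i, T i = restrictM m n * permM (σ i))
    (Q : Fin K → Matrix (Fin m) (Fin n) ℂ)
    (hQ : ∀ i, Q i = Matrix.diagonal w * T i)
    (i : Fin K) :
    T i * (∑ j : Fin K, (Q j)ᴴ * Q j) * (T i)ᴴ =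
      Matrix.diagonal
        ((T i).mulVec (∑ j : Fin K, (T j)ᴴ.mulVec (fun k => (‖w k‖ : ℂ) ^ 2))) ∧
    ∀ k, 0 ≤ ((T i).mulVec (∑ j : Fin K, (T j)ᴴ.mulVec (fun k => (‖w k‖ : ℂ) ^ 2))) k := by
  set d : Fin m → ℂ := fun k => (‖w k‖ : ℂ) ^ 2 with hd
  set e : Fin K → Fin m → Fin n := fun j a => (σ j)⁻¹ (Fin.castLE hmn a) with he
  have hein : ∀ j (a b : Fin m), e j a = e j b → a = b := by
    intro j a b h
    have := (σ j)⁻¹.injective h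
    exact Fin.castLE_injective hmn this
  have hTe : ∀ j (a : Fin m) (b : Fin n), T j a b = if b = e j a then 1 else 0 := by
    intro j a b
    rw [hT, Matrix.mul_apply]
    simp only [restrictM, permM, Matrix.of_apply]
    rw [Finset.sum_eq_single (σ j b)]
    · rw [if_pos rfl, mul_one]
      congr 1
      simp only [he, Equiv.Perm.eq_inv_iff_eq]
      simp [Fin.ext_iff, eq_comm]
    · intro c _ hc
      rw [if_neg (Ne.symm hc), mul_zero]
    · simp
  have hdnn : ∀ k, 0 ≤ d k := by
    intro k
    rw [hd]
    simp only [← Complex.ofReal_pow]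
    exact Complex.zero_le_real.mpr (sq_nonneg _)
  have hQQ : ∀ j, (Q j)ᴴ * Q j = (T j)ᴴ * Matrix.diagonal d * T j := by
    intro j
    have hsw : (fun i => star w i * w i) = d := by
      funext k
      simpa [hd] using RCLike.conj_mul (w k)
    rw [hQ, Matrix.conjTranspose_mul, Matrix.diagonal_conjTranspose, ← Matrix.mul_assoc,
      Matrix.mul_assoc (T j)ᴴ, Matrix.diagonal_mul_diagonal, hsw]
  have hmvT : ∀ j (c : Fin n), ((T j)ᴴ.mulVec d) c = ∑ k, (if c = e j k then d k else 0) := by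
    intro j c
    simp [Matrix.mulVec, dotProduct, Matrix.conjTranspose_apply, hTe, apply_ite (star : ℂ → ℂ),
      ite_mul]
  have hmv : ∀ (v : Fin n → ℂ) a, (T i).mulVec v a = v (e i a) := by
    intro v a
    simp [Matrix.mulVec, dotProduct, hTe, ite_mul]
  have hu : ∀ a, ((T i).mulVec (∑ j : Fin K, (T j)ᴴ.mulVec d)) a
      = ∑ j : Fin K, ∑ k, (if e i a = e j k then d k else 0) := by
    intro a
    rw [hmv]
    rw [Finset.sum_apply]
    exact Finset.sum_congr rfl fun j _ => hmvT j _
  have hmid : ∀ j (c c' : Fin n), ((T j)ᴴ * Matrix.diagonal d * T j) c c'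
      = ∑ k, (if c = e j k ∧ c' = e j k then d k else 0) := by
    intro j c c'
    rw [Matrix.mul_assoc, Matrix.mul_apply]
    refine Finset.sum_congr rfl fun k _ => ?_
    rw [Matrix.conjTranspose_apply, Matrix.diagonal_mul, hTe, hTe]
    by_cases h1 : c = e j k <;> by_cases h2 : c' = e j k <;> simp [h1, h2]
  have hout : ∀ (M : Matrix (Fin n) (Fin n) ℂ) (a b : Fin m),
      (T i * M * (T i)ᴴ) a b = M (e i a) (e i b) := by
    intro M a b
    simp [Matrix.mul_apply, hTe, Matrix.conjTranspose_apply, apply_ite (star : ℂ → ℂ),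
      ite_mul, mul_ite, Finset.sum_ite_eq']
  constructor
  · ext a b
    rw [Matrix.diagonal_apply]
    simp_rw [hQQ]
    rw [show (∑ j : Fin K, (T j)ᴴ * Matrix.diagonal d * T j) = ∑ j : Fin K, ((T j)ᴴ * Matrix.diagonal d * T j) from rfl]
    rw [Matrix.mul_sum, Matrix.sum_mul, Matrix.sum_apply]
    have : ∀ j ∈ Finset.univ, (T i * ((T j)ᴴ * Matrix.diagonal d * T j) * (T i)ᴴ) a b
        = ∑ k, (if e i a = e j k ∧ e i b = e j k then d k else 0) := by
      intro j _
      rw [hout, hmid]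
    rw [Finset.sum_congr rfl this, hu]
    by_cases hab : a = b
    · subst hab
      rw [if_pos rfl]
      simp
    · rw [if_neg hab]
      refine Finset.sum_eq_zero fun j _ => Finset.sum_eq_zero fun k _ => ?_
      rw [if_neg]
      rintro ⟨h1, h2⟩
      exact hab (hein i a b (h1.trans h2.symm))
  · intro a
    rw [hu]
    refine Finset.sum_nonneg fun j _ => Finset.sum_nonneg fun k _ => ?_
    split_ifs
    · exact hdnn k
    · exact le_refl 0
end
end

section
/- With Q_i = diag(w)T_i, 𝒬² = blockdiag(T_i Q*Q T_i*) and ℙ = Q Q* (where Q stacks the Q_i), the total pairwise frame discrepancy satisfies (1/2) Σ_{i,j} ‖T_j* Q_j T_i* z_i − T_i* Q_i T_j* z_j‖² = z*(𝒬² − ℙ) z for all z ∈ ℂ^{Km²}. -/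
open Matrix BigOperators

noncomputable section

lemma aux_T_entry {m n : ℕ} (hmn : m ≤ n) (σ : Equiv.Perm (Fin n)) (k : Fin m) (t : Fin n) :
    (restrictM m n * permM σ) k t = if σ t = Fin.castLE hmn k then 1 else 0 := by
  simp only [Matrix.mul_apply, restrictM, permM, Matrix.of_apply, ite_mul, one_mul, zero_mul]
  have h : ∀ x : Fin n, ((k:ℕ) = (x:ℕ)) ↔ x = Fin.castLE hmn k := by
    intro x
    constructor
    · intro h; exact Fin.ext h.symm
    · intro h; subst h; rfl
  simp_rw [h]
  rw [Finset.sum_ite_eq' Finset.univ (Fin.castLE hmn k) (fun x => if σ t = x then (1:ℂ) else 0)]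
  simp

lemma aux_S_entry {m n : ℕ} (hmn : m ≤ n) (σ τ : Equiv.Perm (Fin n)) (k l : Fin m) :
    ((restrictM m n * permM σ) * (restrictM m n * permM τ)ᴴ) k l =
      if σ⁻¹ (Fin.castLE hmn k) = τ⁻¹ (Fin.castLE hmn l) then 1 else 0 := by
  simp only [Matrix.mul_apply, Matrix.conjTranspose_apply, aux_T_entry hmn]
  have h : ∀ t : Fin n, (σ t = Fin.castLE hmn k) ↔ t = σ⁻¹ (Fin.castLE hmn k) := by
    intro t; constructor
    · intro h; simp [← h]
    · intro h; subst h; simp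
  simp_rw [h, apply_ite (star : ℂ → ℂ), star_one, star_zero, ite_mul, one_mul, zero_mul]
  rw [Finset.sum_ite_eq' Finset.univ (σ⁻¹ (Fin.castLE hmn k))
    (fun t => if τ t = Fin.castLE hmn l then (1:ℂ) else 0)]
  simp only [Finset.mem_univ, if_true]
  congr 1
  apply propext
  constructor
  · intro h2; rw [← h2]; simp
  · intro h2; rw [h2]; simp

lemma aux_TTstar {m n : ℕ} (hmn : m ≤ n) (σ : Equiv.Perm (Fin n)) :
    (restrictM m n * permM σ) * (restrictM m n * permM σ)ᴴ = 1 := by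
  ext k l
  rw [aux_S_entry hmn]
  simp [Matrix.one_apply, EmbeddingLike.apply_eq_iff_eq, Fin.castLE_inj, eq_comm]


lemma aux_key {m n : ℕ} (w : Fin m → ℂ) (f g : Fin m → Fin n)
    (hf : Function.Injective f) (hg : Function.Injective g)
    (S R : Matrix (Fin m) (Fin m) ℂ)
    (hS : ∀ k l, S k l = if f k = g l then 1 else 0)
    (hR : ∀ k l, R k l = if g k = f l then 1 else 0) :
    S * Matrix.diagonal (star w) * R * Matrix.diagonal w * S =
      Matrix.diagonal w * S * Matrix.diagonal (star w) := by
  have e1 : ∀ k b, (S * Matrix.diagonal (star w)) k b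
      = (if f k = g b then 1 else 0) * star (w b) := by
    intro k b; rw [Matrix.mul_diagonal, hS]; rfl
  have e2 : ∀ k a, (S * Matrix.diagonal (star w) * R) k a
      = ∑ b, (if f k = g b then (1:ℂ) else 0) * star (w b) * (if g b = f a then 1 else 0) := by
    intro k a; rw [Matrix.mul_apply]; simp_rw [e1, hR]
  have e3 : ∀ k a, (S * Matrix.diagonal (star w) * R * Matrix.diagonal w) k a
      = (∑ b, (if f k = g b then (1:ℂ) else 0) * star (w b) * (if g b = f a then 1 else 0)) * w a := by
    intro k a; rw [Matrix.mul_diagonal, e2]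
  ext k l
  rw [Matrix.mul_apply]
  simp_rw [e3, hS]
  rw [Matrix.mul_diagonal, Matrix.diagonal_mul, hS]
  rw [Finset.sum_eq_single k]
  · by_cases hkl : f k = g l
    · rw [Finset.sum_eq_single l]
      · simp only [hkl, if_pos rfl, if_pos hkl.symm, Pi.star_apply, if_true, one_pow, one_mul, mul_one]
        ring
      · intro b _ hb
        by_cases h1 : f k = g b
        · exact absurd (hg ((h1.symm.trans hkl : g b = g l))) hb
        · simp [h1]
      · intro h; exact absurd (Finset.mem_univ l) h
    · simp [hkl]
  · intro a _ ha
    have hz : (∑ b : Fin m, (if f k = g b then (1:ℂ) else 0) * star (w b) *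
        (if g b = f a then 1 else 0)) = 0 := by
      apply Finset.sum_eq_zero
      intro b _
      by_cases h1 : f k = g b
      · by_cases h2 : g b = f a
        · exact absurd (hf (h1.trans h2)).symm ha
        · simp [h2]
      · simp [h1]
    rw [hz, zero_mul, zero_mul]
  · intro h; exact absurd (Finset.mem_univ k) h

lemma aux_norm {n : ℕ} (v : Fin n → ℂ) :
    (∑ k, ((‖v k‖ : ℂ))^2) = star v ⬝ᵥ v := by
  simp only [dotProduct, Pi.star_apply]
  refine Finset.sum_congr rfl fun k _ => ?_
  calc ((‖v k‖:ℂ))^2 = ((‖v k‖^2 : ℝ) : ℂ) := by push_cast; ring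
    _ = ((Complex.normSq (v k) : ℝ) : ℂ) := by
        rw [← Complex.sq_norm]
    _ = star (v k) * v k := Complex.normSq_eq_conj_mul_self

lemma aux_dot {m n : ℕ} (M N : Matrix (Fin n) (Fin m) ℂ) (x y : Fin m → ℂ) :
    star (M *ᵥ x) ⬝ᵥ (N *ᵥ y) = star x ⬝ᵥ ((Mᴴ * N) *ᵥ y) := by
  rw [Matrix.star_mulVec, Matrix.dotProduct_mulVec, Matrix.dotProduct_mulVec,
    Matrix.vecMul_vecMul]

lemma aux_sumdot {m K : ℕ} (x y : Fin m → ℂ) (M : Fin K → Matrix (Fin m) (Fin m) ℂ) :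
    ∑ j, x ⬝ᵥ ((M j) *ᵥ y) = x ⬝ᵥ ((∑ j, M j) *ᵥ y) := by
  have h : (∑ j, M j) *ᵥ y = ∑ j, ((M j) *ᵥ y) := by
    ext k
    simp only [Matrix.mulVec, dotProduct, Matrix.sum_apply, Finset.sum_apply,
      Finset.sum_mul]
    exact Finset.sum_comm
  rw [h]
  simp only [dotProduct, Finset.sum_apply, Finset.mul_sum]
  exact Finset.sum_comm

theorem stmt8 {K m n : ℕ} (hmn : m ≤ n) (σ : Fin K → Equiv.Perm (Fin n))
    (w : Fin m → ℂ)
    (T : Fin K → Matrix (Fin m) (Fin n) ℂ)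
    (hT : ∀ i, T i = restrictM m n * permM (σ i))
    (Q : Fin K → Matrix (Fin m) (Fin n) ℂ)
    (hQ : ∀ i, Q i = Matrix.diagonal w * T i)
    (z : Fin K → Fin m → ℂ) :
    (1 / 2 : ℂ) * ∑ i : Fin K, ∑ j : Fin K, ∑ k : Fin n,
        (‖((T j)ᴴ.mulVec ((Q j).mulVec ((T i)ᴴ.mulVec (z i))) -
            (T i)ᴴ.mulVec ((Q i).mulVec ((T j)ᴴ.mulVec (z j)))) k‖ : ℂ) ^ 2 =
      (∑ i : Fin K, star (z i) ⬝ᵥ (T i * (∑ l : Fin K, (Q l)ᴴ * Q l) * (T i)ᴴ).mulVec (z i)) -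
        ∑ i : Fin K, ∑ j : Fin K, star (z i) ⬝ᵥ (Q i * (Q j)ᴴ).mulVec (z j) := by
  classical
  have hf : ∀ i : Fin K, Function.Injective (fun k : Fin m => (σ i)⁻¹ (Fin.castLE hmn k)) := by
    intro i a b hab
    exact Fin.castLE_injective hmn ((σ i)⁻¹.injective hab)
  have hS : ∀ i j (k l : Fin m), (T i * (T j)ᴴ) k l =
      if (σ i)⁻¹ (Fin.castLE hmn k) = (σ j)⁻¹ (Fin.castLE hmn l) then 1 else 0 := by
    intro i j k l; rw [hT i, hT j]; exact aux_S_entry hmn _ _ k l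
  have hTT : ∀ i, T i * (T i)ᴴ = 1 := by intro i; rw [hT i]; exact aux_TTstar hmn _
  have hTTmid : ∀ j (X : Matrix (Fin m) (Fin m) ℂ), T j * ((T j)ᴴ * X) = X := by
    intro j X; rw [← Matrix.mul_assoc, hTT j, Matrix.one_mul]
  have hQT : ∀ i, (Q i)ᴴ = (T i)ᴴ * Matrix.diagonal (star w) := by
    intro i; rw [hQ i, Matrix.conjTranspose_mul, Matrix.diagonal_conjTranspose]
  have hmain : ∀ i j, T i * ((Q j)ᴴ * (T j * ((T i)ᴴ * (Q i * (T j)ᴴ)))) = Q i * (Q j)ᴴ := by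
    intro i j
    have key := aux_key w _ _ (hf i) (hf j) (T i * (T j)ᴴ) (T j * (T i)ᴴ) (hS i j) (hS j i)
    calc T i * ((Q j)ᴴ * (T j * ((T i)ᴴ * (Q i * (T j)ᴴ))))
        = (T i * (T j)ᴴ) * Matrix.diagonal (star w) * (T j * (T i)ᴴ) * Matrix.diagonal w *
            (T i * (T j)ᴴ) := by
          rw [hQT j, hQ i]; simp only [Matrix.mul_assoc]
      _ = Matrix.diagonal w * (T i * (T j)ᴴ) * Matrix.diagonal (star w) := key
      _ = Q i * (Q j)ᴴ := by rw [hQT j, hQ i]; simp only [Matrix.mul_assoc]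
  set F : Fin K → Fin K → ℂ := fun i j =>
    star (z i) ⬝ᵥ ((T i * ((Q j)ᴴ * Q j) * (T i)ᴴ) *ᵥ z i) with hF
  set G : Fin K → Fin K → ℂ := fun i j =>
    star (z i) ⬝ᵥ ((Q i * (Q j)ᴴ) *ᵥ z j) with hG
  have hterm : ∀ i j, (∑ k : Fin n,
      (‖((T j)ᴴ.mulVec ((Q j).mulVec ((T i)ᴴ.mulVec (z i))) -
          (T i)ᴴ.mulVec ((Q i).mulVec ((T j)ᴴ.mulVec (z j)))) k‖ : ℂ) ^ 2)
      = F i j + F j i - G i j - G j i := by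
    intro i j
    rw [aux_norm]
    simp only [Matrix.mulVec_mulVec]
    rw [star_sub, sub_dotProduct, dotProduct_sub, dotProduct_sub,
      aux_dot, aux_dot, aux_dot, aux_dot]
    have h1 : ((T j)ᴴ * (Q j * (T i)ᴴ))ᴴ * ((T j)ᴴ * (Q j * (T i)ᴴ))
        = T i * ((Q j)ᴴ * Q j) * (T i)ᴴ := by
      simp only [Matrix.conjTranspose_mul, Matrix.conjTranspose_conjTranspose,
        Matrix.mul_assoc, hTTmid]
    have h2 : ((T j)ᴴ * (Q j * (T i)ᴴ))ᴴ * ((T i)ᴴ * (Q i * (T j)ᴴ)) = Q i * (Q j)ᴴ := by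
      simp only [Matrix.conjTranspose_mul, Matrix.conjTranspose_conjTranspose,
        Matrix.mul_assoc]
      exact hmain i j
    have h3 : ((T i)ᴴ * (Q i * (T j)ᴴ))ᴴ * ((T j)ᴴ * (Q j * (T i)ᴴ)) = Q j * (Q i)ᴴ := by
      simp only [Matrix.conjTranspose_mul, Matrix.conjTranspose_conjTranspose,
        Matrix.mul_assoc]
      exact hmain j i
    have h4 : ((T i)ᴴ * (Q i * (T j)ᴴ))ᴴ * ((T i)ᴴ * (Q i * (T j)ᴴ))
        = T j * ((Q i)ᴴ * Q i) * (T j)ᴴ := by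
      simp only [Matrix.conjTranspose_mul, Matrix.conjTranspose_conjTranspose,
        Matrix.mul_assoc, hTTmid]
    rw [h1, h2, h3, h4, hF, hG]
    ring
  calc (1 / 2 : ℂ) * ∑ i : Fin K, ∑ j : Fin K, ∑ k : Fin n,
        (‖((T j)ᴴ.mulVec ((Q j).mulVec ((T i)ᴴ.mulVec (z i))) -
            (T i)ᴴ.mulVec ((Q i).mulVec ((T j)ᴴ.mulVec (z j)))) k‖ : ℂ) ^ 2
      = (1 / 2 : ℂ) * ∑ i : Fin K, ∑ j : Fin K, (F i j + F j i - G i j - G j i) := by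
        congr 1
        exact Finset.sum_congr rfl fun i _ => Finset.sum_congr rfl fun j _ => hterm i j
    _ = (∑ i : Fin K, ∑ j : Fin K, F i j) - ∑ i : Fin K, ∑ j : Fin K, G i j := by
        have hFc : ∑ i : Fin K, ∑ j : Fin K, F j i = ∑ i : Fin K, ∑ j : Fin K, F i j :=
          Finset.sum_comm
        have hGc : ∑ i : Fin K, ∑ j : Fin K, G j i = ∑ i : Fin K, ∑ j : Fin K, G i j :=
          Finset.sum_comm
        simp only [Finset.sum_sub_distrib, Finset.sum_add_distrib]
        rw [hFc, hGc]
        ring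
    _ = (∑ i : Fin K, star (z i) ⬝ᵥ (T i * (∑ l : Fin K, (Q l)ᴴ * Q l) * (T i)ᴴ).mulVec (z i)) -
        ∑ i : Fin K, ∑ j : Fin K, star (z i) ⬝ᵥ (Q i * (Q j)ᴴ).mulVec (z j) := by
        congr 1
        refine Finset.sum_congr rfl fun i _ => ?_
        rw [hF]
        rw [aux_sumdot (star (z i)) (z i) (fun j => T i * ((Q j)ᴴ * Q j) * (T i)ᴴ)]
        congr 2
        rw [← Matrix.sum_mul, ← Matrix.mul_sum]
end
end

section
/- With the notation above, the matrix 𝒬² − ℙ = blockdiag(T_i Q*Q T_i*) − Q Q* is positive semidefinite, and z*(𝒬²−ℙ)z = 0 whenever z = Qψ for some ψ. -/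
open Matrix BigOperators
open scoped ComplexOrder

noncomputable section

lemma sum_indic {m n : ℕ} (c : Fin n) (f : Fin m → ℂ) :
    (∑ p : Fin m, if ((c : ℕ) = (p : ℕ)) then f p else 0)
      = if h : (c : ℕ) < m then f ⟨c, h⟩ else 0 := by
  split
  · next h =>
    have he : ∀ p : Fin m, (((c:ℕ) = (p:ℕ)) ↔ ((⟨c,h⟩ : Fin m) = p)) := fun p => by
      simp [Fin.ext_iff]
    simp only [he]
    simp [Finset.sum_ite_eq]
  · next h =>
    apply Finset.sum_eq_zero; intro p _
    rw [if_neg]; intro hc; exact h (hc ▸ p.isLt)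

lemma Tapply {m n : ℕ} (e : Equiv.Perm (Fin n)) (p : Fin m) (j : Fin n) :
    (restrictM m n * permM e) p j = if ((e j : ℕ) = (p : ℕ)) then 1 else 0 := by
  rw [Matrix.mul_apply, Finset.sum_eq_single (e j)]
  · simp [restrictM, permM, eq_comm]
  · intro b _ hb
    simp [permM, Ne.symm hb]
  · simp

def omg {K m n : ℕ} (σ : Fin K → Equiv.Perm (Fin n)) (w : Fin m → ℂ) (i : Fin K) (a : Fin n) : ℂ :=
  if h : ((σ i a : ℕ) < m) then w ⟨(σ i a : ℕ), h⟩ else 0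

def uu {K m n : ℕ} (σ : Fin K → Equiv.Perm (Fin n)) (z : Fin K × Fin m → ℂ)
    (i : Fin K) (a : Fin n) : ℂ :=
  if h : ((σ i a : ℕ) < m) then z (i, ⟨(σ i a : ℕ), h⟩) else 0

section main
variable {K m n : ℕ} (σ : Fin K → Equiv.Perm (Fin n)) (w : Fin m → ℂ)

lemma Qapply (Q : Fin K → Matrix (Fin m) (Fin n) ℂ)
    (hQ : ∀ i, Q i = Matrix.diagonal w * (restrictM m n * permM (σ i)))
    (i : Fin K) (p : Fin m) (j : Fin n) :
    Q i p j = if ((σ i j : ℕ) = (p : ℕ)) then w p else 0 := by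
  rw [hQ, Matrix.diagonal_mul, Tapply]
  split <;> simp

lemma Sapply (Q : Fin K → Matrix (Fin m) (Fin n) ℂ)
    (hQ : ∀ i, Q i = Matrix.diagonal w * (restrictM m n * permM (σ i)))
    (a b : Fin n) :
    (∑ l : Fin K, (Q l)ᴴ * Q l) a b =
      if a = b then ∑ l : Fin K, star (omg σ w l a) * omg σ w l a else 0 := by
  rw [Matrix.sum_apply]
  split
  · next hab =>
    subst hab
    refine Finset.sum_congr rfl fun l _ => ?_
    rw [Matrix.mul_apply]
    simp only [Matrix.conjTranspose_apply, Qapply σ w Q hQ]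
    have : ∀ r : Fin m, star (if ((σ l a : ℕ) = (r:ℕ)) then w r else 0) *
        (if ((σ l a : ℕ) = (r:ℕ)) then w r else 0)
        = if ((σ l a : ℕ) = (r:ℕ)) then star (w r) * w r else 0 := fun r => by
      split <;> simp
    rw [Finset.sum_congr rfl fun r _ => this r, sum_indic]
    unfold omg
    split <;> simp
  · next hab =>
    apply Finset.sum_eq_zero; intro l _
    rw [Matrix.mul_apply]
    apply Finset.sum_eq_zero; intro r _
    simp only [Matrix.conjTranspose_apply, Qapply σ w Q hQ]
    split
    · next h1 =>
      rw [if_neg]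
      · simp
      · intro h2
        exact hab (Equiv.injective _ (Fin.ext (h1.trans h2.symm)))
    · simp

lemma TSTapply (Q : Fin K → Matrix (Fin m) (Fin n) ℂ)
    (hQ : ∀ i, Q i = Matrix.diagonal w * (restrictM m n * permM (σ i)))
    (i : Fin K) (p q : Fin m) :
    ((restrictM m n * permM (σ i)) * (∑ l : Fin K, (Q l)ᴴ * Q l) *
        (restrictM m n * permM (σ i))ᴴ) p q =
      ∑ a : Fin n, (if ((σ i a : ℕ) = (p : ℕ)) then 1 else 0) *
        (∑ l : Fin K, star (omg σ w l a) * omg σ w l a) *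
        (if ((σ i a : ℕ) = (q : ℕ)) then 1 else 0) := by
  rw [Matrix.mul_apply]
  refine Finset.sum_congr rfl fun b _ => ?_
  rw [Matrix.mul_apply]
  have hinner : (∑ a : Fin n, (restrictM m n * permM (σ i)) p a *
      (∑ l : Fin K, (Q l)ᴴ * Q l) a b)
      = (restrictM m n * permM (σ i)) p b *
        (∑ l : Fin K, star (omg σ w l b) * omg σ w l b) := by
    rw [Finset.sum_congr rfl fun a _ => by rw [Sapply σ w Q hQ]]
    simp only [mul_ite, mul_zero]
    rw [Finset.sum_ite_eq' Finset.univ b]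
    simp
  rw [hinner, Matrix.conjTranspose_apply, Tapply, Tapply]
  split <;> split <;> simp
end main
section pointwise
variable {K m n : ℕ} (σ : Fin K → Equiv.Perm (Fin n)) (w : Fin m → ℂ) (z : Fin K × Fin m → ℂ)

lemma hu1 (i : Fin K) (a : Fin n) :
    (∑ p₂ : Fin m, star (z (i, p₂)) * (if ((σ i a : ℕ) = (p₂ : ℕ)) then (1:ℂ) else 0))
      = star (uu σ z i a) := by
  simp only [mul_ite, mul_one, mul_zero]
  rw [sum_indic]
  unfold uu
  split <;> simp

lemma hu2 (i : Fin K) (a : Fin n) :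
    (∑ q₂ : Fin m, (if ((σ i a : ℕ) = (q₂ : ℕ)) then (1:ℂ) else 0) * z (i, q₂))
      = uu σ z i a := by
  simp only [ite_mul, one_mul, zero_mul]
  rw [sum_indic]
  rfl

lemma hw1 (i : Fin K) (a : Fin n) :
    (∑ p₂ : Fin m, star (z (i, p₂)) * (if ((σ i a : ℕ) = (p₂ : ℕ)) then w p₂ else 0))
      = omg σ w i a * star (uu σ z i a) := by
  simp only [mul_ite, mul_zero]
  rw [sum_indic]
  unfold omg uu
  split
  · ring
  · simp

lemma hw2 (j : Fin n → Fin n) (a : Fin n) (i : Fin K) :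
    (∑ q₂ : Fin m, star (if ((σ i a : ℕ) = (q₂ : ℕ)) then w q₂ else 0) * z (i, q₂))
      = star (omg σ w i a) * uu σ z i a := by
  have : ∀ q₂ : Fin m, star (if ((σ i a : ℕ) = (q₂ : ℕ)) then w q₂ else 0) * z (i, q₂)
      = if ((σ i a : ℕ) = (q₂ : ℕ)) then star (w q₂) * z (i, q₂) else 0 := fun q₂ => by
    split <;> simp
  rw [Finset.sum_congr rfl fun q₂ _ => this q₂, sum_indic]
  unfold omg uu
  split <;> simp

end pointwise

section quad
variable {K m n : ℕ} (σ : Fin K → Equiv.Perm (Fin n)) (w : Fin m → ℂ)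

lemma quadform (Q : Fin K → Matrix (Fin m) (Fin n) ℂ)
    (hQ : ∀ i, Q i = Matrix.diagonal w * (restrictM m n * permM (σ i)))
    (M : Matrix (Fin K × Fin m) (Fin K × Fin m) ℂ)
    (hM : M = Matrix.of fun p q =>
      (if p.1 = q.1 then ((restrictM m n * permM (σ p.1)) * (∑ l : Fin K, (Q l)ᴴ * Q l) *
          (restrictM m n * permM (σ p.1))ᴴ) p.2 q.2 else 0) -
        (Q p.1 * (Q q.1)ᴴ) p.2 q.2)
    (z : Fin K × Fin m → ℂ) :
    star z ⬝ᵥ M.mulVec z =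
      ∑ a : Fin n,
        ((∑ l : Fin K, star (omg σ w l a) * omg σ w l a) *
            (∑ i : Fin K, star (uu σ z i a) * uu σ z i a)
          - star (∑ i : Fin K, star (omg σ w i a) * uu σ z i a) *
              (∑ i : Fin K, star (omg σ w i a) * uu σ z i a)) := by
  subst hM
  have start : star z ⬝ᵥ (Matrix.of fun p q =>
      (if p.1 = q.1 then ((restrictM m n * permM (σ p.1)) * (∑ l : Fin K, (Q l)ᴴ * Q l) *
          (restrictM m n * permM (σ p.1))ᴴ) p.2 q.2 else 0) -
        (Q p.1 * (Q q.1)ᴴ) p.2 q.2 : Matrix (Fin K × Fin m) (Fin K × Fin m) ℂ).mulVec z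
      = ∑ p : Fin K × Fin m, ∑ q : Fin K × Fin m, star (z p) *
          (((if p.1 = q.1 then ((restrictM m n * permM (σ p.1)) * (∑ l : Fin K, (Q l)ᴴ * Q l) *
              (restrictM m n * permM (σ p.1))ᴴ) p.2 q.2 else 0) -
            (Q p.1 * (Q q.1)ᴴ) p.2 q.2) * z q) := by
    simp only [dotProduct, Matrix.mulVec, Matrix.of_apply, Pi.star_apply,
      Finset.mul_sum]
  rw [start]
  have hsplit : ∀ p q : Fin K × Fin m,
      star (z p) *
        (((if p.1 = q.1 then ((restrictM m n * permM (σ p.1)) * (∑ l : Fin K, (Q l)ᴴ * Q l) *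
              (restrictM m n * permM (σ p.1))ᴴ) p.2 q.2 else 0) -
          (Q p.1 * (Q q.1)ᴴ) p.2 q.2) * z q)
      = (∑ a : Fin n, star (z p) *
            ((if p.1 = q.1 then (∑ l : Fin K, star (omg σ w l a) * omg σ w l a) else 0) *
              (if ((σ p.1 a : ℕ) = (p.2 : ℕ)) then 1 else 0) *
              (if ((σ q.1 a : ℕ) = (q.2 : ℕ)) then 1 else 0) * z q))
        - (∑ a : Fin n, star (z p) *
            ((if ((σ p.1 a : ℕ) = (p.2 : ℕ)) then w p.2 else 0) *
              star (if ((σ q.1 a : ℕ) = (q.2 : ℕ)) then w q.2 else 0) * z q)) := by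
    intro p q
    have h1 : (if p.1 = q.1 then ((restrictM m n * permM (σ p.1)) *
          (∑ l : Fin K, (Q l)ᴴ * Q l) * (restrictM m n * permM (σ p.1))ᴴ) p.2 q.2 else 0)
        = ∑ a : Fin n, (if p.1 = q.1 then (∑ l : Fin K, star (omg σ w l a) * omg σ w l a) else 0) *
            (if ((σ p.1 a : ℕ) = (p.2 : ℕ)) then 1 else 0) *
            (if ((σ q.1 a : ℕ) = (q.2 : ℕ)) then 1 else 0) := by
      split
      · next h =>
        rw [TSTapply σ w Q hQ]
        refine Finset.sum_congr rfl fun a _ => ?_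
        rw [← h]
        ring
      · next h =>
        symm
        apply Finset.sum_eq_zero
        intro a _
        simp
    have h2 : (Q p.1 * (Q q.1)ᴴ) p.2 q.2
        = ∑ a : Fin n, (if ((σ p.1 a : ℕ) = (p.2 : ℕ)) then w p.2 else 0) *
            star (if ((σ q.1 a : ℕ) = (q.2 : ℕ)) then w q.2 else 0) := by
      rw [Matrix.mul_apply]
      simp only [Matrix.conjTranspose_apply, Qapply σ w Q hQ]
    rw [h1, h2, sub_mul, mul_sub, Finset.sum_mul, Finset.sum_mul, Finset.mul_sum,
      Finset.mul_sum]
  rw [Finset.sum_congr rfl fun p _ => Finset.sum_congr rfl fun q _ => hsplit p q]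
  rw [Finset.sum_congr rfl fun p (_ : p ∈ Finset.univ) => Finset.sum_sub_distrib _ _,
    Finset.sum_sub_distrib, Finset.sum_sub_distrib]
  congr 1
  -- F part
  · rw [Finset.sum_congr rfl fun p (_ : p ∈ Finset.univ) => Finset.sum_comm, Finset.sum_comm]
    refine Finset.sum_congr rfl fun a _ => ?_
    simp only [Fintype.sum_prod_type]
    rw [Finset.mul_sum]
    refine Finset.sum_congr rfl fun i _ => ?_
    rw [Finset.sum_comm]
    have pull : ∀ j : Fin K,
        (∑ p₂ : Fin m, ∑ q₂ : Fin m, star (z (i, p₂)) *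
          ((if i = j then (∑ l : Fin K, star (omg σ w l a) * omg σ w l a) else 0) *
            (if ((σ i a : ℕ) = (p₂ : ℕ)) then 1 else 0) *
            (if ((σ j a : ℕ) = (q₂ : ℕ)) then 1 else 0) * z (j, q₂)))
        = if i = j then (∑ p₂ : Fin m, ∑ q₂ : Fin m, star (z (i, p₂)) *
            ((∑ l : Fin K, star (omg σ w l a) * omg σ w l a) *
              (if ((σ i a : ℕ) = (p₂ : ℕ)) then 1 else 0) *
              (if ((σ j a : ℕ) = (q₂ : ℕ)) then 1 else 0) * z (j, q₂))) else 0 := by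
      intro j
      split
      · next h => simp [h]
      · next h => simp [h]
    rw [Finset.sum_congr rfl fun j _ => pull j, Finset.sum_ite_eq]
    simp only [Finset.mem_univ, if_true]
    rw [← hu1 σ z i a, ← hu2 σ z i a, Finset.sum_mul_sum]
    simp only [Finset.mul_sum]
    refine Finset.sum_congr rfl fun p₂ _ => Finset.sum_congr rfl fun q₂ _ => by ring
  -- G part
  · rw [Finset.sum_congr rfl fun p (_ : p ∈ Finset.univ) => Finset.sum_comm, Finset.sum_comm]
    refine Finset.sum_congr rfl fun a _ => ?_
    have hstar : star (∑ i : Fin K, star (omg σ w i a) * uu σ z i a)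
        = ∑ i : Fin K, omg σ w i a * star (uu σ z i a) := by
      rw [star_sum]
      exact Finset.sum_congr rfl fun i _ => by rw [star_mul', star_star]
    simp only [Fintype.sum_prod_type]
    rw [hstar, Finset.sum_mul_sum]
    refine Finset.sum_congr rfl fun i _ => ?_
    rw [Finset.sum_comm]
    refine Finset.sum_congr rfl fun j _ => ?_
    rw [← hw1 σ w z i a, ← hw2 σ w z (fun x => x) a j, Finset.sum_mul_sum]
    exact Finset.sum_congr rfl fun p₂ _ => Finset.sum_congr rfl fun q₂ _ => by ring

end quad

lemma cs {k : ℕ} (a b : Fin k → ℂ) :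
    Complex.normSq (∑ i, star (a i) * b i) ≤
      (∑ i, Complex.normSq (a i)) * (∑ i, Complex.normSq (b i)) := by
  calc Complex.normSq (∑ i, star (a i) * b i)
      = (‖∑ i, star (a i) * b i‖) ^ 2 := Complex.normSq_eq_norm_sq _
    _ ≤ (∑ i, ‖star (a i) * b i‖) ^ 2 := by
        apply pow_le_pow_left₀ (norm_nonneg _)
        exact norm_sum_le _ _
    _ = (∑ i, ‖a i‖ * ‖b i‖) ^ 2 := by
        congr 1
        exact Finset.sum_congr rfl fun i _ => by
          rw [norm_mul]
          simp
    _ ≤ (∑ i, ‖a i‖ ^ 2) * (∑ i, ‖b i‖ ^ 2) :=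
        Finset.sum_mul_sq_le_sq_mul_sq _ _ _
    _ = (∑ i, Complex.normSq (a i)) * (∑ i, Complex.normSq (b i)) := by
        rw [Finset.sum_congr rfl fun i _ => Complex.sq_norm (a i),
          Finset.sum_congr rfl fun i _ => Complex.sq_norm (b i)]


theorem stmt9 {K m n : ℕ} (hmn : m ≤ n) (σ : Fin K → Equiv.Perm (Fin n))
    (w : Fin m → ℂ)
    (T : Fin K → Matrix (Fin m) (Fin n) ℂ)
    (hT : ∀ i, T i = restrictM m n * permM (σ i))
    (Q : Fin K → Matrix (Fin m) (Fin n) ℂ)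
    (hQ : ∀ i, Q i = Matrix.diagonal w * T i)
    (M : Matrix (Fin K × Fin m) (Fin K × Fin m) ℂ)
    (hM : M = Matrix.of fun p q =>
      (if p.1 = q.1 then (T p.1 * (∑ l : Fin K, (Q l)ᴴ * Q l) * (T p.1)ᴴ) p.2 q.2 else 0) -
        (Q p.1 * (Q q.1)ᴴ) p.2 q.2) :
    M.PosSemidef ∧
    ∀ ψ : Fin n → ℂ,
      star (fun p : Fin K × Fin m => (Q p.1).mulVec ψ p.2) ⬝ᵥ
        M.mulVec (fun p : Fin K × Fin m => (Q p.1).mulVec ψ p.2) = 0 := by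
  have hQ' : ∀ i, Q i = Matrix.diagonal w * (restrictM m n * permM (σ i)) := fun i => by
    rw [hQ i, hT i]
  have hM' : M = Matrix.of fun p q =>
      (if p.1 = q.1 then ((restrictM m n * permM (σ p.1)) * (∑ l : Fin K, (Q l)ᴴ * Q l) *
          (restrictM m n * permM (σ p.1))ᴴ) p.2 q.2 else 0) -
        (Q p.1 * (Q q.1)ᴴ) p.2 q.2 := by
    rw [hM]
    ext p q
    simp only [Matrix.of_apply, hT]
  have hS : (∑ l : Fin K, (Q l)ᴴ * Q l).IsHermitian := by
    show (∑ l : Fin K, (Q l)ᴴ * Q l)ᴴ = _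
    rw [Matrix.conjTranspose_sum]
    exact Finset.sum_congr rfl fun l _ => Matrix.isHermitian_conjTranspose_mul_self (Q l)
  have hTSTherm : ∀ i : Fin K, ((restrictM m n * permM (σ i)) * (∑ l : Fin K, (Q l)ᴴ * Q l) *
      (restrictM m n * permM (σ i))ᴴ).IsHermitian := fun i =>
    Matrix.isHermitian_mul_mul_conjTranspose _ hS
  have hherm : M.IsHermitian := by
    rw [hM']
    show _ᴴ = _
    ext p q
    simp only [Matrix.conjTranspose_apply, Matrix.of_apply, star_sub]
    congr 1
    · by_cases h : p.1 = q.1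
      · rw [if_pos h.symm, if_pos h, ← h]
        rw [← Matrix.conjTranspose_apply, (hTSTherm p.1).eq]
      · rw [if_neg (fun hh => h hh.symm), if_neg h, star_zero]
    · rw [← Matrix.conjTranspose_apply, Matrix.conjTranspose_mul,
        Matrix.conjTranspose_conjTranspose]
  constructor
  · refine Matrix.PosSemidef.of_dotProduct_mulVec_nonneg hherm fun x => ?_
    rw [quadform σ w Q hQ' M hM' x]
    apply Finset.sum_nonneg
    intro a _
    have h1 : (∑ l : Fin K, star (omg σ w l a) * omg σ w l a)
        = ((∑ l : Fin K, Complex.normSq (omg σ w l a) : ℝ) : ℂ) := by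
      push_cast
      exact Finset.sum_congr rfl fun l _ => by
        rw [Complex.normSq_eq_conj_mul_self, Complex.star_def]
    have h2 : (∑ i : Fin K, star (uu σ x i a) * uu σ x i a)
        = ((∑ i : Fin K, Complex.normSq (uu σ x i a) : ℝ) : ℂ) := by
      push_cast
      exact Finset.sum_congr rfl fun i _ => by
        rw [Complex.normSq_eq_conj_mul_self, Complex.star_def]
    have h3 : star (∑ i : Fin K, star (omg σ w i a) * uu σ x i a) *
          (∑ i : Fin K, star (omg σ w i a) * uu σ x i a)
        = ((Complex.normSq (∑ i : Fin K, star (omg σ w i a) * uu σ x i a) : ℝ) : ℂ) := by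
      rw [Complex.star_def, mul_comm, Complex.mul_conj]
    rw [h1, h2, h3, ← Complex.ofReal_mul, ← Complex.ofReal_sub]
    rw [Complex.zero_le_real]
    exact sub_nonneg.mpr (cs _ _)
  · intro ψ
    rw [quadform σ w Q hQ' M hM']
    apply Finset.sum_eq_zero
    intro a _
    have huQ : ∀ i : Fin K,
        uu σ (fun p : Fin K × Fin m => (Q p.1).mulVec ψ p.2) i a = omg σ w i a * ψ a := by
      intro i
      unfold uu omg
      split
      · next h =>
        show (Q i).mulVec ψ _ = _
        rw [Matrix.mulVec, dotProduct]
        simp only [Qapply σ w Q hQ']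
        rw [Finset.sum_eq_single a]
        · rw [if_pos rfl]
        · intro b _ hb
          rw [if_neg, zero_mul]
          intro hc
          exact hb (Equiv.injective _ (Fin.ext hc))
        · simp
      · next h => simp
    simp only [huQ]
    have hsa : star (∑ l : Fin K, star (omg σ w l a) * omg σ w l a)
        = ∑ l : Fin K, star (omg σ w l a) * omg σ w l a := by
      rw [star_sum]
      exact Finset.sum_congr rfl fun l _ => by rw [star_mul', star_star]; ring
    have e1 : (∑ i : Fin K, star (omg σ w i a * ψ a) * (omg σ w i a * ψ a))
        = (∑ i : Fin K, star (omg σ w i a) * omg σ w i a) * (star (ψ a) * ψ a) := by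
      rw [Finset.sum_mul]
      exact Finset.sum_congr rfl fun i _ => by rw [star_mul']; ring
    have e2 : (∑ i : Fin K, star (omg σ w i a) * (omg σ w i a * ψ a))
        = (∑ i : Fin K, star (omg σ w i a) * omg σ w i a) * ψ a := by
      rw [Finset.sum_mul]
      exact Finset.sum_congr rfl fun i _ => by ring
    rw [e1, e2, star_mul', hsa]
    ring
end
end

section
/- With Q = diag(Sw)T, the pairwise discrepancy quadratic form z*(𝒬² − QQ*)z can be rewritten as a quadratic form in the probe: z*(𝒬² − QQ*)z = w* S* [diag(T T* |z|²) − diag(z) T T* diag(z̄)] S w, for all z ∈ ℂ^{Km²} and w ∈ ℂ^{m²}. -/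
open Matrix BigOperators

noncomputable section

theorem stmt13 {K m n : ℕ} (hmn : m ≤ n) (σ : Fin K → Equiv.Perm (Fin n))
    (w : Fin m → ℂ) (z : Fin K × Fin m → ℂ)
    (Q : Matrix (Fin K × Fin m) (Fin n) ℂ)
    (hQ : Q = Matrix.diagonal ((stackM K m).mulVec w) * Tstack K m n σ) :
    star z ⬝ᵥ
        ((Matrix.diagonal ((Tstack K m n σ).mulVec ((Tstack K m n σ)ᴴ.mulVec
            ((stackM K m).mulVec (fun k => (‖w k‖ : ℂ) ^ 2)))) - Q * Qᴴ).mulVec z) =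
      star w ⬝ᵥ
        (((stackM K m)ᴴ *
            (Matrix.diagonal ((Tstack K m n σ).mulVec ((Tstack K m n σ)ᴴ.mulVec
                (fun p => (‖z p‖ : ℂ) ^ 2))) -
              Matrix.diagonal z * Tstack K m n σ * (Tstack K m n σ)ᴴ *
                Matrix.diagonal (star z)) * stackM K m).mulVec w) := by
  subst hQ
  set T := Tstack K m n σ with hT
  set S := stackM K m with hSdef
  rw [Matrix.mul_assoc (Matrix.diagonal z) T Tᴴ]
  set A : Matrix (Fin K × Fin m) (Fin K × Fin m) ℂ := T * Tᴴ with hAdef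
  have hTr : ∀ p j, star (T p j) = T p j := by
    intro p j
    simp only [hT, Tstack, restrictM, permM, Matrix.of_apply, Matrix.mul_apply]
    rw [star_sum]
    refine Finset.sum_congr rfl fun x _ => ?_
    rw [star_mul']
    split <;> split <;> simp
  have hAsymm : ∀ p q, A q p = A p q := by
    intro p q
    simp only [hAdef, Matrix.mul_apply, Matrix.conjTranspose_apply]
    refine Finset.sum_congr rfl fun x _ => ?_
    rw [hTr, hTr]; ring
  have hSv : ∀ (v : Fin m → ℂ) p, S.mulVec v p = v p.2 := by
    intro v p; simp [hSdef, stackM, Matrix.mulVec, dotProduct]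
  have hns : ∀ a : ℂ, ((‖a‖ : ℂ))^2 = star a * a := by
    intro a
    rw [RCLike.star_def, mul_comm, Complex.mul_conj]
    push_cast [Complex.normSq_eq_norm_sq]
    rfl
  have hw1 : S *ᵥ w = fun p => w p.2 := funext fun p => hSv w p
  have hw2 : S *ᵥ (fun k => (‖w k‖ : ℂ) ^ 2) = fun p => star (w p.2) * w p.2 :=
    funext fun p => by rw [hSv]; exact hns _
  have hz2 : (fun p : Fin K × Fin m => ((‖z p‖ : ℂ))^2) = fun p => star (z p) * z p :=
    funext fun p => hns _
  have hQQ : (Matrix.diagonal (S.mulVec w) * T) * (Matrix.diagonal (S.mulVec w) * T)ᴴ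
      = Matrix.diagonal (S.mulVec w) * A * Matrix.diagonal (star (S.mulVec w)) := by
    rw [Matrix.conjTranspose_mul, Matrix.diagonal_conjTranspose, hAdef,
      Matrix.mul_assoc, Matrix.mul_assoc, Matrix.mul_assoc]
  -- general expansion lemma
  have hexp : ∀ x y : (Fin K × Fin m) → ℂ,
      star x ⬝ᵥ ((Matrix.diagonal (A *ᵥ (fun q => star (y q) * y q)) -
          Matrix.diagonal y * A * Matrix.diagonal (star y)) *ᵥ x) =
        ∑ p, ∑ q, (star (x p) * x p * A p q * (star (y q) * y q)
          - star (x p) * (y p * A p q * star (y q)) * x q) := by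
    intro x y
    simp only [dotProduct, Matrix.sub_mulVec, Pi.sub_apply, Matrix.mulVec_diagonal]
    refine Finset.sum_congr rfl fun p _ => ?_
    have h1 : (A *ᵥ fun q => star (y q) * y q) p = ∑ q, A p q * (star (y q) * y q) := rfl
    have h2 : ((Matrix.diagonal y * A * Matrix.diagonal (star y)) *ᵥ x) p
        = ∑ q, y p * A p q * star (y q) * x q := by
      refine Finset.sum_congr rfl fun q _ => ?_
      simp only [Matrix.mul_diagonal, Matrix.diagonal_mul, Pi.star_apply]
    rw [h1, h2, mul_sub, Finset.sum_mul, Finset.mul_sum, Finset.mul_sum, ← Finset.sum_sub_distrib]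
    exact Finset.sum_congr rfl fun q _ => by simp only [Pi.star_apply]; ring
  -- reduce RHS sandwich
  have hsand : ∀ D : Matrix (Fin K × Fin m) (Fin K × Fin m) ℂ,
      star w ⬝ᵥ ((Sᴴ * D * S) *ᵥ w) = star (fun p : Fin K × Fin m => w p.2) ⬝ᵥ
        (D *ᵥ (fun p : Fin K × Fin m => w p.2)) := by
    intro D
    rw [← Matrix.mulVec_mulVec, ← Matrix.mulVec_mulVec, Matrix.dotProduct_mulVec,
      ← Matrix.star_mulVec, hw1]
  rw [hQQ, hw1, hw2, hz2, Matrix.mulVec_mulVec, Matrix.mulVec_mulVec, ← hAdef, hsand,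
    hexp z (fun p => w p.2), hexp (fun p => w p.2) z, Finset.sum_comm]
  refine Finset.sum_congr rfl fun p _ => Finset.sum_congr rfl fun q _ => ?_
  rw [hAsymm q p]
  ring
end
end

section
/- The matrix D − A is positive semidefinite, where D = diag(S*(T T* |z|²)) and A = S* diag(z) T T* diag(z̄) S, for any z ∈ ℂ^{Km²}. -/
open Matrix BigOperators
open scoped ComplexOrder

noncomputable section

def fIdx {K m n : ℕ} (hmn : m ≤ n) (σ : Fin K → Equiv.Perm (Fin n))
    (p : Fin K × Fin m) : Fin n :=
  (σ p.1)⁻¹ ⟨p.2, lt_of_lt_of_le p.2.isLt hmn⟩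

lemma Tstack_apply {K m n : ℕ} (hmn : m ≤ n) (σ : Fin K → Equiv.Perm (Fin n))
    (p : Fin K × Fin m) (j : Fin n) :
    Tstack K m n σ p j = if j = fIdx hmn σ p then 1 else 0 := by
  simp only [Tstack, Matrix.of_apply, Matrix.mul_apply, restrictM, permM]
  rw [Finset.sum_eq_single (⟨p.2, lt_of_lt_of_le p.2.isLt hmn⟩ : Fin n)]
  · rw [if_pos rfl, one_mul, fIdx, Equiv.Perm.inv_def]
    congr 1
    rw [eq_comm, Equiv.apply_eq_iff_eq_symm_apply, eq_comm]
  · intro b _ hb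
    rw [if_neg, zero_mul]
    intro h
    exact hb (by ext; simp [← h])
  · simp

theorem stmt14 {K m n : ℕ} (hmn : m ≤ n) (σ : Fin K → Equiv.Perm (Fin n))
    (z : Fin K × Fin m → ℂ) :
    (Matrix.diagonal ((stackM K m)ᴴ.mulVec ((Tstack K m n σ).mulVec
        ((Tstack K m n σ)ᴴ.mulVec (fun p => (‖z p‖ : ℂ) ^ 2)))) -
      (stackM K m)ᴴ * Matrix.diagonal z * Tstack K m n σ * (Tstack K m n σ)ᴴ *
        Matrix.diagonal (star z) * stackM K m).PosSemidef := by
  set f := fIdx hmn σ with hf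
  set T := Tstack K m n σ with hT
  set S := stackM K m with hS
  set dvec := Sᴴ.mulVec (T.mulVec (Tᴴ.mulVec (fun p => (‖z p‖ : ℂ) ^ 2))) with hdvec
  set B := Sᴴ * Matrix.diagonal z * T with hB
  have hBH : Bᴴ = Tᴴ * Matrix.diagonal (star z) * S := by
    simp [hB, Matrix.conjTranspose_mul, Matrix.diagonal_conjTranspose, Matrix.mul_assoc]
  have hA : Sᴴ * Matrix.diagonal z * T * Tᴴ * Matrix.diagonal (star z) * S = B * Bᴴ := by
    rw [hBH, hB]; simp only [Matrix.mul_assoc]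
  have hd : ∀ j, dvec j = ∑ p, if p.2 = j then
      (∑ q, if f p = f q then ((‖z q‖ : ℂ))^2 else 0) else 0 := by
    intro j
    simp only [hdvec, hS, hT, hf, Matrix.mulVec, dotProduct, Matrix.conjTranspose_apply,
      stackM, Matrix.of_apply, Tstack_apply hmn, apply_ite (star : ℂ → ℂ), star_one,
      star_zero, ite_mul, one_mul, zero_mul, mul_ite, mul_one, mul_zero,
      Finset.sum_ite_eq', Finset.mem_univ, if_true]
  have hDH : (Matrix.diagonal dvec).IsHermitian := by
    rw [Matrix.isHermitian_diagonal_iff]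
    intro j
    rw [_root_.IsSelfAdjoint, hd j]
    simp [apply_ite (star : ℂ → ℂ), ← Complex.ofReal_pow, Complex.star_def,
      Complex.conj_ofReal]
  rw [Matrix.posSemidef_iff_dotProduct_mulVec]
  constructor
  · exact hDH.sub (by rw [hA]; exact Matrix.isHermitian_mul_conjTranspose_self B)
  · intro w
    set a : Fin n → ℂ := fun r => ∑ p, if f p = r then star (w p.2) * z p else 0 with ha
    set b : Fin n → ℂ := fun r => ∑ p, if f p = r then star (w p.2) * w p.2 else 0 with hb
    set c : Fin n → ℂ := fun r => ∑ q, if f q = r then ((‖z q‖ : ℂ))^2 else 0 with hc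
    have hy : ∀ r, (Bᴴ.mulVec w) r = ∑ p, if f p = r then star (z p) * w p.2 else 0 := by
      intro r
      rw [hBH]
      simp only [hS, hT, hf, Matrix.mulVec, dotProduct, Matrix.mul_apply,
        Matrix.conjTranspose_apply, Matrix.diagonal_apply, stackM, Matrix.of_apply,
        Tstack_apply hmn, apply_ite (star : ℂ → ℂ), star_one, star_zero, Pi.star_apply,
        ite_mul, one_mul, zero_mul, mul_ite, mul_one, mul_zero,
        Finset.sum_ite_eq', Finset.sum_ite_eq, Finset.mem_univ, if_true]
      have e1 : ∀ x : Fin m, (∑ p : Fin K × Fin m, if p.2 = x then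
            (if r = fIdx hmn σ p then star (z p) else 0) else 0) * w x
          = ∑ p : Fin K × Fin m, if p.2 = x then
            (if r = fIdx hmn σ p then star (z p) else 0) * w x else 0 := by
        intro x
        rw [Finset.sum_mul]
        exact Finset.sum_congr rfl fun p _ => by rw [ite_mul, zero_mul]
      rw [Finset.sum_congr rfl fun x _ => e1 x, Finset.sum_comm]
      refine Finset.sum_congr rfl fun p _ => ?_
      rw [Finset.sum_ite_eq Finset.univ p.2]
      by_cases h : r = fIdx hmn σ p
      · simp [h]
      · simp [h, Ne.symm h]
    have hya : ∀ r, (Bᴴ.mulVec w) r = star (a r) := by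
      intro r
      rw [hy r]
      have har : a r = ∑ p, if f p = r then star (w p.2) * z p else 0 := rfl
      rw [har, star_sum]
      refine Finset.sum_congr rfl fun p _ => ?_
      simp [apply_ite (star : ℂ → ℂ), mul_comm]
    have hqA : star w ⬝ᵥ (B * Bᴴ).mulVec w = ∑ r, a r * star (a r) := by
      rw [← Matrix.mulVec_mulVec, Matrix.dotProduct_mulVec]
      have hsb : star w ᵥ* B = star (Bᴴ.mulVec w) := by
        rw [Matrix.star_mulVec, Matrix.conjTranspose_conjTranspose]
      rw [hsb]
      simp only [dotProduct, Pi.star_apply, hya, star_star]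
    -- quadratic form of the diagonal part
    have hqD : star w ⬝ᵥ (Matrix.diagonal dvec).mulVec w = ∑ r, b r * c r := by
      have step1 : star w ⬝ᵥ (Matrix.diagonal dvec).mulVec w
          = ∑ p, (star (w p.2) * w p.2) * (∑ q, if f p = f q then ((‖z q‖ : ℂ))^2 else 0) := by
        simp only [dotProduct, Matrix.mulVec_diagonal, Pi.star_apply]
        have : ∀ j, star (w j) * (dvec j * w j)
            = ∑ p, if p.2 = j then (star (w j) * w j) *
                (∑ q, if f p = f q then ((‖z q‖ : ℂ))^2 else 0) else 0 := by
          intro j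
          rw [hd j, Finset.sum_mul, Finset.mul_sum]
          refine Finset.sum_congr rfl fun p _ => ?_
          split <;> ring
        rw [Finset.sum_congr rfl fun j _ => this j, Finset.sum_comm]
        refine Finset.sum_congr rfl fun p _ => ?_
        rw [Finset.sum_ite_eq Finset.univ p.2]
        simp only [Finset.mem_univ, if_true]
      rw [step1]
      have expand : ∀ p : Fin K × Fin m, (∑ q, if f p = f q then ((‖z q‖ : ℂ))^2 else 0)
          = ∑ r, if f p = r then c r else 0 := by
        intro p
        rw [Finset.sum_eq_single (f p)]
        · rw [if_pos rfl, hc]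
          exact Finset.sum_congr rfl fun q _ => if_congr eq_comm rfl rfl
        · intro r _ hr
          exact if_neg fun h => hr h.symm
        · simp
      rw [Finset.sum_congr rfl fun p _ => by rw [expand p]]
      calc ∑ p : Fin K × Fin m, (star (w p.2) * w p.2) * (∑ r, if f p = r then c r else 0)
          = ∑ p : Fin K × Fin m, ∑ r, if f p = r then (star (w p.2) * w p.2) * c r else 0 := by
            refine Finset.sum_congr rfl fun p _ => ?_
            rw [Finset.mul_sum]
            exact Finset.sum_congr rfl fun r _ => by rw [mul_ite, mul_zero]
        _ = ∑ r, ∑ p : Fin K × Fin m, if f p = r then (star (w p.2) * w p.2) * c r else 0 :=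
            Finset.sum_comm
        _ = ∑ r, b r * c r := by
            refine Finset.sum_congr rfl fun r _ => ?_
            rw [hb, Finset.sum_mul]
            exact Finset.sum_congr rfl fun p _ => by rw [ite_mul, zero_mul]
    -- Cauchy–Schwarz per index r
    have key : ∀ r, 0 ≤ b r * c r - a r * star (a r) := by
      intro r
      set vv : EuclideanSpace ℂ (Fin K × Fin m) := WithLp.toLp 2 (fun p => if f p = r then w p.2 else 0) with hvv
      set uu : EuclideanSpace ℂ (Fin K × Fin m) := WithLp.toLp 2 (fun p => if f p = r then z p else 0) with huu
      have hav : a r = inner ℂ vv uu := by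
        rw [ha, PiLp.inner_apply]
        refine Finset.sum_congr rfl fun p _ => ?_
        by_cases h : f p = r <;>
          simp [hvv, huu, h, RCLike.inner_apply, Complex.star_def] <;> ring
      have hbv : b r = inner ℂ vv vv := by
        rw [hb, PiLp.inner_apply]
        refine Finset.sum_congr rfl fun p _ => ?_
        by_cases h : f p = r <;> simp [hvv, h, RCLike.inner_apply, Complex.star_def, Complex.conj_mul']
      have hcv : c r = inner ℂ uu uu := by
        rw [hc, PiLp.inner_apply]
        refine Finset.sum_congr rfl fun q _ => ?_
        by_cases h : f q = r <;>
          simp [huu, h, RCLike.inner_apply, RCLike.conj_mul, Complex.ofReal_pow]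
      rw [hav, hbv, hcv]
      rw [inner_self_eq_norm_sq_to_K, inner_self_eq_norm_sq_to_K]
      have : (inner ℂ vv uu : ℂ) * star (inner ℂ vv uu : ℂ) = ((‖(inner ℂ vv uu : ℂ)‖ ^ 2 : ℝ) : ℂ) := by
        rw [Complex.star_def, Complex.mul_conj']
        norm_cast
      rw [this]
      have hle : ‖(inner ℂ vv uu : ℂ)‖ ^ 2 ≤ ‖vv‖ ^ 2 * ‖uu‖ ^ 2 := by
        rw [← mul_pow]
        exact pow_le_pow_left₀ (norm_nonneg _) (norm_inner_le_norm vv uu) 2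
      calc (0 : ℂ) ≤ ((‖vv‖ ^ 2 * ‖uu‖ ^ 2 - ‖(inner ℂ vv uu : ℂ)‖ ^ 2 : ℝ) : ℂ) := by
            rw [Complex.zero_le_real]; linarith
        _ = (‖vv‖ : ℂ) ^ 2 * (‖uu‖ : ℂ) ^ 2 - ((‖(inner ℂ vv uu : ℂ)‖ ^ 2 : ℝ) : ℂ) := by
            push_cast; ring
    -- conclude
    rw [Matrix.sub_mulVec, dotProduct_sub, hA, hqA, hqD, ← Finset.sum_sub_distrib]
    exact Finset.sum_nonneg fun r _ => key r
end
end

section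
/- For the frame update z ← P_Q z with P_Q = Q(Q*Q)^{-1}Q* (Q*Q invertible), the pairwise discrepancy is non-increasing: (P_Q z)* (𝒬² − QQ*) (P_Q z) = 0 ≤ z*(𝒬² − QQ*)z; in fact P_Q z lies in range(Q), on which the quadratic form 𝒬² − QQ* vanishes whenever T_i T_i* = I for all i. -/
open Matrix BigOperators

noncomputable section

namespace Stmt19Aux
variable {K m n : ℕ}

def xind (hmn : m ≤ n) (σ : Fin K → Equiv.Perm (Fin n)) (p : Fin K × Fin m) : Fin n :=
  (σ p.1)⁻¹ ⟨(p.2 : ℕ), lt_of_lt_of_le p.2.isLt hmn⟩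

lemma stack_mulVec (v : Fin m → ℂ) (p : Fin K × Fin m) :
    (stackM K m).mulVec v p = v p.2 := by
  simp [stackM, Matrix.mulVec, dotProduct, ite_mul]

lemma T_apply (hmn : m ≤ n) (σ : Fin K → Equiv.Perm (Fin n)) (p : Fin K × Fin m) (j : Fin n) :
    Tstack K m n σ p j = if j = xind hmn σ p then 1 else 0 := by
  have hcond : ((p.2 : ℕ) = ((σ p.1 j : Fin n) : ℕ)) ↔ j = xind hmn σ p := by
    unfold xind
    rw [Equiv.Perm.eq_inv_iff_eq, Fin.ext_iff, eq_comm]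
  simp only [Tstack, restrictM, permM, Matrix.of_apply, Matrix.mul_apply, mul_ite, mul_one,
    mul_zero, Finset.sum_ite_eq, Finset.mem_univ, if_true]
  rw [if_congr hcond rfl rfl]

lemma Q_apply (hmn : m ≤ n) (σ : Fin K → Equiv.Perm (Fin n)) (w : Fin m → ℂ)
    (Q : Matrix (Fin K × Fin m) (Fin n) ℂ)
    (hQ : Q = Matrix.diagonal ((stackM K m).mulVec w) * Tstack K m n σ)
    (p : Fin K × Fin m) (j : Fin n) :
    Q p j = w p.2 * (if j = xind hmn σ p then 1 else 0) := by
  subst hQ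
  rw [Matrix.diagonal_mul, stack_mulVec, T_apply]

lemma QQh_apply (hmn : m ≤ n) (σ : Fin K → Equiv.Perm (Fin n)) (w : Fin m → ℂ)
    (Q : Matrix (Fin K × Fin m) (Fin n) ℂ)
    (hQ : Q = Matrix.diagonal ((stackM K m).mulVec w) * Tstack K m n σ)
    (p q : Fin K × Fin m) :
    (Q * Qᴴ) p q =
      if xind hmn σ p = xind hmn σ q then w p.2 * (starRingEnd ℂ) (w q.2) else 0 := by
  simp only [Matrix.mul_apply, Matrix.conjTranspose_apply, Q_apply hmn σ w Q hQ,
    RCLike.star_def, _root_.map_mul, apply_ite (starRingEnd ℂ), _root_.map_one, _root_.map_zero]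
  rw [show (∑ j, w p.2 * (if j = xind hmn σ p then (1:ℂ) else 0) *
      ((starRingEnd ℂ) (w q.2) * (if j = xind hmn σ q then 1 else 0)))
      = ∑ j, (if j = xind hmn σ p then
          (if j = xind hmn σ q then w p.2 * (starRingEnd ℂ) (w q.2) else 0) else 0) from
    Finset.sum_congr rfl fun j _ => by split_ifs <;> ring]
  simp [Finset.sum_ite_eq']

lemma D_apply (hmn : m ≤ n) (σ : Fin K → Equiv.Perm (Fin n)) (w : Fin m → ℂ)
    (p : Fin K × Fin m) :
    (Tstack K m n σ).mulVec ((Tstack K m n σ)ᴴ.mulVec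
        ((stackM K m).mulVec (fun k => (‖w k‖ : ℂ) ^ 2))) p
      = ∑ q, if xind hmn σ p = xind hmn σ q then (‖w q.2‖ : ℂ) ^ 2 else 0 := by
  have h1 : (stackM K m).mulVec (fun k => (‖w k‖ : ℂ) ^ 2) = fun q => (‖w q.2‖ : ℂ) ^ 2 :=
    funext fun q => stack_mulVec _ q
  rw [h1]
  simp only [Matrix.mulVec, dotProduct, Matrix.conjTranspose_apply, T_apply hmn,
    apply_ite (star : ℂ → ℂ), star_one, star_zero, ite_mul, one_mul, zero_mul,
    Finset.sum_ite_eq', Finset.mem_univ, if_true]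

end Stmt19Aux

open scoped ComplexOrder

theorem stmt19 {K m n : ℕ} (hmn : m ≤ n) (σ : Fin K → Equiv.Perm (Fin n))
    (w : Fin m → ℂ)
    (Q : Matrix (Fin K × Fin m) (Fin n) ℂ)
    (hQ : Q = Matrix.diagonal ((stackM K m).mulVec w) * Tstack K m n σ)
    (hinv : IsUnit (Qᴴ * Q))
    (M : Matrix (Fin K × Fin m) (Fin K × Fin m) ℂ)
    (hM : M = Matrix.diagonal ((Tstack K m n σ).mulVec ((Tstack K m n σ)ᴴ.mulVec
        ((stackM K m).mulVec (fun k => (‖w k‖ : ℂ) ^ 2)))) - Q * Qᴴ)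
    (z : Fin K × Fin m → ℂ) :
    star ((Q * (Qᴴ * Q)⁻¹ * Qᴴ).mulVec z) ⬝ᵥ
        M.mulVec ((Q * (Qᴴ * Q)⁻¹ * Qᴴ).mulVec z) = 0 ∧
    0 ≤ star z ⬝ᵥ M.mulVec z := by
  classical
  set x : Fin K × Fin m → Fin n := Stmt19Aux.xind hmn σ with hx
  set F : (Fin K × Fin m → ℂ) → (Fin K × Fin m) → (Fin K × Fin m) → ℂ :=
    fun v p q => if x p = x q then
      (starRingEnd ℂ) (v p) * v p * (‖w q.2‖ : ℂ) ^ 2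
        - (starRingEnd ℂ) (v p) * w p.2 * (v q * (starRingEnd ℂ) (w q.2)) else 0 with hF
  -- general quadratic form formula
  have hform : ∀ v : Fin K × Fin m → ℂ, star v ⬝ᵥ M.mulVec v = ∑ p, ∑ q, F v p q := by
    intro v
    rw [hM, Matrix.sub_mulVec, dotProduct_sub]
    have h1 : star v ⬝ᵥ (Matrix.diagonal ((Tstack K m n σ).mulVec ((Tstack K m n σ)ᴴ.mulVec
        ((stackM K m).mulVec (fun k => (‖w k‖ : ℂ) ^ 2))))).mulVec v
        = ∑ p, ∑ q, (if x p = x q then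
            (starRingEnd ℂ) (v p) * v p * (‖w q.2‖ : ℂ) ^ 2 else 0) := by
      simp only [dotProduct, Matrix.mulVec_diagonal, Pi.star_apply, RCLike.star_def,
        Stmt19Aux.D_apply hmn σ w, ← hx]
      refine Finset.sum_congr rfl fun p _ => ?_
      rw [show (starRingEnd ℂ) (v p) * ((∑ q, if x p = x q then (‖w q.2‖ : ℂ) ^ 2 else 0) * v p)
          = ∑ q, (starRingEnd ℂ) (v p) * ((if x p = x q then (‖w q.2‖ : ℂ) ^ 2 else 0) * v p) by
        rw [← Finset.mul_sum, ← Finset.sum_mul]]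
      refine Finset.sum_congr rfl fun q _ => ?_
      split_ifs <;> ring
    have h2 : star v ⬝ᵥ (Q * Qᴴ).mulVec v
        = ∑ p, ∑ q, (if x p = x q then
            (starRingEnd ℂ) (v p) * w p.2 * (v q * (starRingEnd ℂ) (w q.2)) else 0) := by
      simp only [dotProduct, Matrix.mulVec, Pi.star_apply, RCLike.star_def,
        Stmt19Aux.QQh_apply hmn σ w Q hQ, ← hx]
      refine Finset.sum_congr rfl fun p _ => ?_
      rw [Finset.mul_sum]
      refine Finset.sum_congr rfl fun q _ => ?_
      split_ifs <;> ring
    rw [h1, h2, ← Finset.sum_sub_distrib]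
    refine Finset.sum_congr rfl fun p _ => ?_
    rw [← Finset.sum_sub_distrib]
    refine Finset.sum_congr rfl fun q _ => ?_
    simp only [hF]
    split_ifs <;> ring
  constructor
  · -- projection lands in range Q, where the form vanishes
    set ψ : Fin n → ℂ := ((Qᴴ * Q)⁻¹ * Qᴴ).mulVec z with hψ
    have hz' : (Q * (Qᴴ * Q)⁻¹ * Qᴴ).mulVec z = Q.mulVec ψ := by
      rw [hψ, Matrix.mulVec_mulVec, Matrix.mul_assoc]
    have hz'p : ∀ p, Q.mulVec ψ p = w p.2 * ψ (x p) := by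
      intro p
      simp only [Matrix.mulVec, dotProduct, Stmt19Aux.Q_apply hmn σ w Q hQ, ← hx,
        mul_ite, mul_one, mul_zero, ite_mul, zero_mul, Finset.sum_ite_eq', Finset.mem_univ,
        if_true]
    rw [hz', hform]
    refine Finset.sum_eq_zero fun p _ => Finset.sum_eq_zero fun q _ => ?_
    simp only [hF]
    by_cases h : x p = x q
    · rw [if_pos h, hz'p p, hz'p q, ← h]
      have hcq : ((‖w q.2‖ : ℂ)) ^ 2 = (starRingEnd ℂ) (w q.2) * w q.2 :=
        (Complex.conj_mul' (w q.2)).symm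
      rw [hcq]
      simp only [_root_.map_mul]
      ring
    · rw [if_neg h]
  · -- nonnegativity via Lagrange identity
    have key : ∀ p q, F z p q + F z q p
        = if x p = x q then
            (starRingEnd ℂ) (z p * w q.2 - z q * w p.2) * (z p * w q.2 - z q * w p.2) else 0 := by
      intro p q
      simp only [hF]
      by_cases h : x p = x q
      · rw [if_pos h, if_pos h.symm, if_pos h]
        have hcq : ((‖w q.2‖ : ℂ)) ^ 2 = (starRingEnd ℂ) (w q.2) * w q.2 :=
          (Complex.conj_mul' (w q.2)).symm
        have hcp : ((‖w p.2‖ : ℂ)) ^ 2 = (starRingEnd ℂ) (w p.2) * w p.2 :=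
          (Complex.conj_mul' (w p.2)).symm
        rw [hcq, hcp]
        simp only [_root_.map_mul, _root_.map_sub]
        ring
      · rw [if_neg h, if_neg (fun hh => h hh.symm), if_neg h, add_zero]
    have hdouble : star z ⬝ᵥ M.mulVec z + star z ⬝ᵥ M.mulVec z
        = ∑ p, ∑ q, (if x p = x q then
            (starRingEnd ℂ) (z p * w q.2 - z q * w p.2) * (z p * w q.2 - z q * w p.2) else 0) := by
      rw [hform]
      nth_rewrite 2 [Finset.sum_comm]
      rw [← Finset.sum_add_distrib]
      refine Finset.sum_congr rfl fun p _ => ?_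
      rw [← Finset.sum_add_distrib]
      exact Finset.sum_congr rfl fun q _ => key p q
    have hnn : (0 : ℂ) ≤ star z ⬝ᵥ M.mulVec z + star z ⬝ᵥ M.mulVec z := by
      rw [hdouble]
      refine Finset.sum_nonneg fun p _ => Finset.sum_nonneg fun q _ => ?_
      split_ifs
      · exact star_mul_self_nonneg _
      · exact le_refl 0
    have h2 : (0 : ℂ) ≤ 2 * (star z ⬝ᵥ M.mulVec z) := by rwa [two_mul]
    have hhalf : (0 : ℂ) ≤ 2⁻¹ := by rw [Complex.le_def]; norm_num
    calc (0 : ℂ) ≤ 2⁻¹ * (2 * (star z ⬝ᵥ M.mulVec z)) := mul_nonneg hhalf h2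
      _ = star z ⬝ᵥ M.mulVec z := by ring
end
end
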